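/- Consider a three-agent instance that contains no (2/3)-high-valued good (v_a(g) < (2/3)·MMS_a for every agent a and good g) and in which no subset of whole goods is a reducible bundle with respect to any agent. Then the instance admits a (2/3)-MMS allocation. -/

import Mathlib

open scoped BigOperators Classical

/-- An instance of fair division with subjective divisibility: `n` agents and `m` goods,
each good of total amount 1.  Each agent `i` assigns a nonnegative value `v i g` to each
good `g` and regards each good as either divisible or indivisible for her. -/
structure FairDivision (n m : ℕ) where
  /-- agent `i`'s value for good `g` -/
  v : Fin n → Fin m → ℝ
  v_nonneg : ∀ i g, 0 ≤ v i g
  /-- `divisible i g` means agent `i` regards good `g` as divisible -/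
  divisible : Fin n → Fin m → Prop

namespace FairDivision

variable {n m : ℕ}

/-- Agent `i`'s utility from receiving fraction `t ∈ [0,1]` of good `g`:
`t * v i g` if `g` is divisible for `i`; `v i g` if `g` is indivisible for `i` and `t = 1`;
and `0` if `g` is indivisible for `i` and `t < 1`. -/
noncomputable def frUtil (I : FairDivision n m) (i : Fin n) (g : Fin m) (t : ℝ) : ℝ :=
  if I.divisible i g then t * I.v i g else if t = 1 then I.v i g else 0

/-- Agent `i`'s (additive) utility for a bundle `b`, given by the fraction `b g` of each good. -/
noncomputable def util (I : FairDivision n m) (i : Fin n) (b : Fin m → ℝ) : ℝ :=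
  ∑ g, I.frUtil i g (b g)

/-- Agent `i`'s utility for the bundle `b` with good `g` omitted. -/
noncomputable def utilMinus (I : FairDivision n m) (i : Fin n) (b : Fin m → ℝ) (g : Fin m) : ℝ :=
  ∑ g' ∈ Finset.univ.erase g, I.frUtil i g' (b g')

/-- A complete allocation: fractions in `[0,1]` summing to `1` for every good. -/
def IsAllocation (I : FairDivision n m) (x : Fin n → Fin m → ℝ) : Prop :=
  (∀ i g, 0 ≤ x i g ∧ x i g ≤ 1) ∧ ∀ g, ∑ i, x i g = 1

/-- A partial allocation: fractions in `[0,1]` summing to at most `1` for every good. -/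
def IsPartialAllocation (I : FairDivision n m) (x : Fin n → Fin m → ℝ) : Prop :=
  (∀ i g, 0 ≤ x i g ∧ x i g ≤ 1) ∧ ∀ g, ∑ i, x i g ≤ 1

/-- The maximin share of agent `i`: the supremum, over all fractional `n`-partitions
`P` of the goods, of the minimum over the parts `P j` of agent `i`'s utility. -/
noncomputable def MMS (I : FairDivision n m) (i : Fin n) : ℝ :=
  sSup { r : ℝ | ∃ P : Fin n → Fin m → ℝ, I.IsAllocation P ∧ r = ⨅ j, I.util i (P j) }

/-- Non-wastefulness: every positive fraction an agent receives yields her positive utility. -/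
def NonWasteful (I : FairDivision n m) (x : Fin n → Fin m → ℝ) : Prop :=
  ∀ i g, 0 < x i g → 0 < I.frUtil i g (x i g)

/-- Envy-freeness. -/
def EF (I : FairDivision n m) (x : Fin n → Fin m → ℝ) : Prop :=
  ∀ i j, I.util i (x j) ≤ I.util i (x i)

/-- Envy-freeness for mixed goods: for all agents `i, j`, if every good `j` receives a
positive fraction of is indivisible for `i`, then `i` does not envy `j` after removing some
such good from `j`'s bundle; otherwise `i` does not envy `j`. -/
def EFM (I : FairDivision n m) (x : Fin n → Fin m → ℝ) : Prop :=
  ∀ i j,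
    ((∀ g, 0 < x j g → ¬ I.divisible i g) →
      ∃ g, 0 < x j g ∧ I.utilMinus i (x j) g ≤ I.util i (x i)) ∧
    ((¬ ∀ g, 0 < x j g → ¬ I.divisible i g) → I.util i (x j) ≤ I.util i (x i))

/-- EFXM: as EFM, but the envy must vanish after removing any positively valued such good. -/
def EFXM (I : FairDivision n m) (x : Fin n → Fin m → ℝ) : Prop :=
  ∀ i j,
    ((∀ g, 0 < x j g → ¬ I.divisible i g) →
      ∀ g, 0 < x j g → 0 < I.v i g → I.utilMinus i (x j) g ≤ I.util i (x i)) ∧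
    ((¬ ∀ g, 0 < x j g → ¬ I.divisible i g) → I.util i (x j) ≤ I.util i (x i))

/-- EF1M: if `j`'s bundle contains (a positive fraction of) some good that `i` regards as
indivisible and values positively, the envy of `i` must vanish after removing some such good;
otherwise `i` does not envy `j`. -/
def EF1M (I : FairDivision n m) (x : Fin n → Fin m → ℝ) : Prop :=
  ∀ i j,
    ((∃ g, 0 < x j g ∧ ¬ I.divisible i g ∧ 0 < I.v i g) →
      ∃ g, 0 < x j g ∧ ¬ I.divisible i g ∧ 0 < I.v i g ∧
        I.utilMinus i (x j) g ≤ I.util i (x i)) ∧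
    ((¬ ∃ g, 0 < x j g ∧ ¬ I.divisible i g ∧ 0 < I.v i g) → I.util i (x j) ≤ I.util i (x i))

/-- Pareto optimality (among complete allocations). -/
def ParetoOptimal (I : FairDivision n m) (x : Fin n → Fin m → ℝ) : Prop :=
  ¬ ∃ y, I.IsAllocation y ∧ (∀ i, I.util i (x i) ≤ I.util i (y i)) ∧
    ∃ i, I.util i (x i) < I.util i (y i)

/-- In a 3-agent instance, `B` (a set of whole goods) is a reducible bundle with respect to
agent `i`: `u_i(B) ≥ (2/3)·MMS_i`, `u_j(M∖B) ≥ 2·MMS_j` for some agent `j ≠ i`, and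
`u_k(M∖B) ≥ (4/3)·MMS_k` for the remaining agent `k`. -/
def IsReducible (I : FairDivision 3 m) (B : Finset (Fin m)) (i : Fin 3) : Prop :=
  2 / 3 * I.MMS i ≤ ∑ g ∈ B, I.v i g ∧
    ∃ j, j ≠ i ∧ 2 * I.MMS j ≤ ∑ g ∈ Bᶜ, I.v j g ∧
      ∀ k, k ≠ i → k ≠ j → 4 / 3 * I.MMS k ≤ ∑ g ∈ Bᶜ, I.v k g

end FairDivision


namespace FairDivision

variable {m : ℕ}

lemma frUtil_nonneg (I : FairDivision 3 m) (i : Fin 3) (g : Fin m) {t : ℝ} (h0 : 0 ≤ t) :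
    0 ≤ I.frUtil i g t := by
  unfold frUtil
  split_ifs with h1 h2
  · exact mul_nonneg h0 (I.v_nonneg i g)
  · exact I.v_nonneg i g
  · exact le_rfl

lemma frUtil_le_mul (I : FairDivision 3 m) (i : Fin 3) (g : Fin m) {t : ℝ}
    (h0 : 0 ≤ t) (h1 : t ≤ 1) : I.frUtil i g t ≤ t * I.v i g := by
  unfold frUtil
  split_ifs with hd he
  · exact le_rfl
  · rw [he, one_mul]
  · exact mul_nonneg h0 (I.v_nonneg i g)

lemma frUtil_one (I : FairDivision 3 m) (i : Fin 3) (g : Fin m) :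
    I.frUtil i g 1 = I.v i g := by
  unfold frUtil; split_ifs with hd he
  · rw [one_mul]
  · rfl
  · exact absurd rfl he

lemma frUtil_zero (I : FairDivision 3 m) (i : Fin 3) (g : Fin m) :
    I.frUtil i g 0 = 0 := by
  unfold frUtil; split_ifs with hd he
  · rw [zero_mul]
  · exact absurd he (by norm_num)
  · rfl

lemma frUtil_indiv_ne_one (I : FairDivision 3 m) (i : Fin 3) (g : Fin m) {t : ℝ}
    (hd : ¬ I.divisible i g) (ht : t ≠ 1) : I.frUtil i g t = 0 := by
  unfold frUtil; split_ifs <;> tauto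

/-- Utility of a "one split good + whole bundle" allocation piece. -/
lemma util_split (I : FairDivision 3 m) (i : Fin 3) (σ : Fin m) (Q : Finset (Fin m))
    (hσ : σ ∉ Q) (w : ℝ) :
    I.util i (fun g => if g = σ then w else if g ∈ Q then 1 else 0)
      = I.frUtil i σ w + ∑ g ∈ Q, I.v i g := by
  unfold util
  rw [← Finset.add_sum_erase Finset.univ _ (Finset.mem_univ σ)]
  congr 1
  · simp
  · have h1 : ∀ g ∈ Finset.univ.erase σ,
        I.frUtil i g (if g = σ then w else if g ∈ Q then 1 else 0)
          = if g ∈ Q then I.v i g else 0 := by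
      intro g hg
      rw [Finset.mem_erase] at hg
      rw [if_neg hg.1]
      by_cases hq : g ∈ Q
      · rw [if_pos hq, if_pos hq, frUtil_one]
      · rw [if_neg hq, if_neg hq, frUtil_zero]
    rw [Finset.sum_congr rfl h1, Finset.sum_ite_mem]
    congr 1
    exact Finset.inter_eq_right.mpr fun g hg =>
      Finset.mem_erase.mpr ⟨ne_of_mem_of_not_mem hg hσ, Finset.mem_univ g⟩

/-- 3·MMS is at most the total value. -/
lemma mms_le_total (I : FairDivision 3 m) (i : Fin 3) :
    3 * I.MMS i ≤ ∑ g, I.v i g := by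
  have htot : (0:ℝ) ≤ ∑ g, I.v i g := Finset.sum_nonneg fun g _ => I.v_nonneg i g
  have h : I.MMS i ≤ (∑ g, I.v i g) / 3 := by
    apply Real.sSup_le
    · rintro r ⟨P, hP, rfl⟩
      have hbdd : BddBelow (Set.range fun j => I.util i (P j)) :=
        (Set.finite_range _).bddBelow
      have hsum : ∑ j, I.util i (P j) ≤ ∑ g, I.v i g := by
        unfold util
        rw [Finset.sum_comm]
        apply Finset.sum_le_sum
        intro g _
        have hone := hP.2 g
        rw [Fin.sum_univ_three] at hone ⊢
        have b0 := hP.1 0 g; have b1 := hP.1 1 g; have b2 := hP.1 2 g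
        have f0 := I.frUtil_le_mul i g b0.1 b0.2
        have f1 := I.frUtil_le_mul i g b1.1 b1.2
        have f2 := I.frUtil_le_mul i g b2.1 b2.2
        nlinarith [I.v_nonneg i g]
      have h0 := ciInf_le hbdd (0 : Fin 3)
      have h1 := ciInf_le hbdd (1 : Fin 3)
      have h2 := ciInf_le hbdd (2 : Fin 3)
      rw [Fin.sum_univ_three] at hsum
      linarith
    · positivity
  linarith

/-- Building an allocation from three finsets partitioning the goods off one
distinguished good `σ`, which is split with weights `w`. -/
lemma alloc_split (I : FairDivision 3 m) (Q : Fin 3 → Finset (Fin m)) (σ : Fin m)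
    (hd : ∀ j k, j ≠ k → Disjoint (Q j) (Q k))
    (hσ : ∀ j, σ ∉ Q j)
    (hcov : ∀ g, g ≠ σ → ∃ j, g ∈ Q j)
    (w : Fin 3 → ℝ) (hw0 : ∀ j, 0 ≤ w j) (hw1 : ∀ j, w j ≤ 1)
    (hws : w 0 + w 1 + w 2 = 1) :
    I.IsAllocation (fun i g => if g = σ then w i else if g ∈ Q i then 1 else 0) := by
  constructor
  · intro i g
    dsimp only
    split_ifs with h1 h2
    · exact ⟨hw0 i, hw1 i⟩
    · norm_num
    · norm_num
  · intro g
    by_cases hg : g = σ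
    · subst hg
      simp only [if_pos rfl]
      rw [Fin.sum_univ_three]; exact hws
    · obtain ⟨j0, hj0⟩ := hcov g hg
      have huniq : ∀ k, k ≠ j0 → g ∉ Q k := by
        intro k hk hgk
        exact (Finset.disjoint_left.mp (hd k j0 hk)) hgk hj0
      have hterm : ∀ k : Fin 3,
          (if g = σ then w k else if g ∈ Q k then (1:ℝ) else 0) = if k = j0 then 1 else 0 := by
        intro k
        rw [if_neg hg]
        by_cases hk : k = j0
        · subst hk; rw [if_pos hj0, if_pos rfl]
        · rw [if_neg (huniq k hk), if_neg hk]
      calc (∑ i : Fin 3, if g = σ then w i else if g ∈ Q i then (1:ℝ) else 0)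
          = ∑ k : Fin 3, if k = j0 then 1 else 0 :=
            Finset.sum_congr rfl (fun k _ => hterm k)
        _ = 1 := by simp


/-- The key impossibility: five "big" goods, at most one of which is divisible for `y`,
force `MMS y` below itself. -/
lemma endgame_contra (I : FairDivision 3 m) (y : Fin 3)
    (five : Finset (Fin m)) (σ : Fin m) (hσ5 : σ ∈ five) (h5 : five.card = 5)
    (hindiv : ∀ g ∈ five, g ≠ σ → ¬ I.divisible y g)
    (hK0 : I.v y σ + ∑ g ∈ fiveᶜ, I.v y g < I.MMS y)
    (hpair : ∀ u ∈ five, ∀ u' ∈ five, u ≠ u' → u ≠ σ → u' ≠ σ →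
      I.v y u + I.v y u' + I.v y σ + ∑ g ∈ fiveᶜ, I.v y g < 2 * I.MMS y) :
    False := by
  classical
  set γ : ℝ := I.v y σ with hγ
  set dst : ℝ := ∑ g ∈ fiveᶜ, I.v y g with hdst
  have hγ0 : 0 ≤ γ := I.v_nonneg y σ
  have hdst0 : 0 ≤ dst := Finset.sum_nonneg fun g _ => I.v_nonneg y g
  set S : Finset (Fin m) := five.erase σ with hS
  have hScard : S.card = 4 := by
    rw [hS, Finset.card_erase_of_mem hσ5, h5]
  have hSne : ∃ a ∈ S, ∃ b ∈ S, a ≠ b := by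
    rw [← Finset.one_lt_card]; omega
  obtain ⟨a0, ha0, b0, hb0, hab0⟩ := hSne
  set PAIRS : Finset (Fin m × Fin m) :=
    (S ×ˢ S).filter (fun p => p.1 ≠ p.2) with hPAIRS
  have hPne : PAIRS.Nonempty :=
    ⟨(a0, b0), Finset.mem_filter.mpr ⟨Finset.mem_product.mpr ⟨ha0, hb0⟩, hab0⟩⟩
  set K2 : ℝ := PAIRS.sup' hPne (fun p => I.v y p.1 + I.v y p.2) with hK2def
  have hSmem : ∀ g ∈ S, g ∈ five ∧ g ≠ σ := by
    intro g hg
    rw [hS, Finset.mem_erase] at hg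
    exact ⟨hg.2, hg.1⟩
  have hK2 : K2 + γ + dst < 2 * I.MMS y := by
    have : K2 < 2 * I.MMS y - γ - dst := by
      rw [hK2def, Finset.sup'_lt_iff]
      rintro ⟨u, u'⟩ hp
      rw [Finset.mem_filter, Finset.mem_product] at hp
      obtain ⟨⟨hu, hu'⟩, hne⟩ := hp
      have h1 := hSmem u hu
      have h2 := hSmem u' hu'
      have := hpair u h1.1 u' h2.1 hne h1.2 h2.2
      linarith
    linarith
  set Kmax : ℝ := max (γ + dst) ((K2 + γ + dst) / 2) with hKmax
  have hKmaxμ : Kmax < I.MMS y := by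
    apply max_lt
    · linarith
    · linarith
  have hKmax0 : 0 ≤ Kmax := le_trans (by linarith) (le_max_left _ _)
  have hfinal : I.MMS y ≤ Kmax := by
    rw [MMS]
    apply Real.sSup_le _ hKmax0
    rintro r ⟨P, hP, rfl⟩
    have hbdd : BddBelow (Set.range fun j => I.util y (P j)) :=
      (Set.finite_range _).bddBelow
    -- at most one part holds a good wholly
    have hPP : ∀ (j k : Fin 3), j ≠ k → ∀ g, P j g + P k g ≤ 1 := by
      intro j k hjk g
      have hsum := hP.2 g
      have hsub : ({j, k} : Finset (Fin 3)) ⊆ Finset.univ := Finset.subset_univ _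
      have := Finset.sum_le_sum_of_subset_of_nonneg hsub
        (fun i _ _ => (hP.1 i g).1)
      rw [Finset.sum_pair hjk, hsum] at this
      exact this
    have huniq : ∀ g (j k : Fin 3), j ≠ k → P j g = 1 → ¬ P k g = 1 := by
      intro g j k hjk hj hk
      have := hPP j k hjk g
      rw [hj, hk] at this; linarith
    set n : Fin 3 → ℕ := fun j => (S.filter (fun g => P j g = 1)).card with hn
    -- per-part utility bound
    have hutil : ∀ j : Fin 3, I.util y (P j) ≤
        (∑ g ∈ S.filter (fun g => P j g = 1), I.v y g) + P j σ * γ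
          + ∑ g ∈ fiveᶜ, P j g * I.v y g := by
      intro j
      have hsplit : I.util y (P j)
          = (∑ g ∈ five, I.frUtil y g (P j g)) + ∑ g ∈ fiveᶜ, I.frUtil y g (P j g) := by
        rw [util, ← Finset.sum_add_sum_compl five]
      rw [hsplit]
      have hfive : (∑ g ∈ five, I.frUtil y g (P j g))
          = I.frUtil y σ (P j σ) + ∑ g ∈ S, I.frUtil y g (P j g) := by
        rw [hS]
        exact (Finset.add_sum_erase five (fun g => I.frUtil y g (P j g)) hσ5).symm
      rw [hfive]
      have hSbound : (∑ g ∈ S, I.frUtil y g (P j g))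
          = ∑ g ∈ S.filter (fun g => P j g = 1), I.v y g := by
        rw [Finset.sum_filter]
        apply Finset.sum_congr rfl
        intro g hg
        obtain ⟨hg5, hgσ⟩ := hSmem g hg
        by_cases hone : P j g = 1
        · rw [if_pos hone, hone, frUtil_one]
        · rw [if_neg hone, I.frUtil_indiv_ne_one y g (hindiv g hg5 hgσ) hone]
      have hσb : I.frUtil y σ (P j σ) ≤ P j σ * γ :=
        I.frUtil_le_mul y σ (hP.1 j σ).1 (hP.1 j σ).2
      have hcb : (∑ g ∈ fiveᶜ, I.frUtil y g (P j g)) ≤ ∑ g ∈ fiveᶜ, P j g * I.v y g :=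
        Finset.sum_le_sum fun g _ => I.frUtil_le_mul y g (hP.1 j g).1 (hP.1 j g).2
      rw [hSbound]
      linarith
    by_cases hzero : ∃ j, n j = 0
    · obtain ⟨j, hj⟩ := hzero
      have hempty : S.filter (fun g => P j g = 1) = ∅ := Finset.card_eq_zero.mp hj
      have h1 : I.util y (P j) ≤ γ + dst := by
        have := hutil j
        rw [hempty, Finset.sum_empty] at this
        have hσ1 : P j σ * γ ≤ γ := by
          nlinarith [(hP.1 j σ).1, (hP.1 j σ).2]
        have hd1 : (∑ g ∈ fiveᶜ, P j g * I.v y g) ≤ dst := by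
          rw [hdst]
          apply Finset.sum_le_sum
          intro g _
          nlinarith [(hP.1 j g).1, (hP.1 j g).2, I.v_nonneg y g]
        linarith
      have := ciInf_le hbdd j
      refine le_trans this (le_trans h1 (le_max_left _ _))
    · push_neg at hzero
      have hn1 : ∀ j, 1 ≤ n j := fun j => Nat.one_le_iff_ne_zero.mpr (hzero j)
      have hcount : n 0 + n 1 + n 2 ≤ 4 := by
        have hcards : ∀ j, n j = ∑ g ∈ S, if P j g = 1 then 1 else 0 := by
          intro j; rw [hn]; exact Finset.card_filter _ _
        have hg1 : ∀ g ∈ S, ((if P 0 g = 1 then 1 else 0) + (if P 1 g = 1 then 1 else 0)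
            + (if P 2 g = 1 then 1 else 0) : ℕ) ≤ 1 := by
          intro g _
          by_cases h0 : P 0 g = 1 <;> by_cases h1 : P 1 g = 1 <;> by_cases h2 : P 2 g = 1
          · exact absurd h1 (huniq g 0 1 (by decide) h0)
          · exact absurd h1 (huniq g 0 1 (by decide) h0)
          · exact absurd h2 (huniq g 0 2 (by decide) h0)
          · simp [h0, h1, h2]
          · exact absurd h2 (huniq g 1 2 (by decide) h1)
          · simp [h0, h1, h2]
          · simp [h0, h1, h2]
          · simp [h0, h1, h2]
        calc n 0 + n 1 + n 2
            = ∑ g ∈ S, ((if P 0 g = 1 then 1 else 0) + (if P 1 g = 1 then 1 else 0)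
                + (if P 2 g = 1 then 1 else 0) : ℕ) := by
              rw [hcards 0, hcards 1, hcards 2, ← Finset.sum_add_distrib,
                ← Finset.sum_add_distrib]
          _ ≤ ∑ _g ∈ S, 1 := Finset.sum_le_sum hg1
          _ = 4 := by rw [Finset.sum_const, smul_eq_mul, mul_one, hScard]
      have hex2 : ∃ j1 j2 : Fin 3, j1 ≠ j2 ∧ n j1 = 1 ∧ n j2 = 1 := by
        have h0 := hn1 0; have h1 := hn1 1; have h2 := hn1 2
        rcases Nat.lt_or_ge (n 0) 2 with c0 | c0 <;>
          rcases Nat.lt_or_ge (n 1) 2 with c1 | c1 <;>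
          rcases Nat.lt_or_ge (n 2) 2 with c2 | c2
        · exact ⟨0, 1, by decide, by omega, by omega⟩
        · exact ⟨0, 1, by decide, by omega, by omega⟩
        · exact ⟨0, 2, by decide, by omega, by omega⟩
        · exact ⟨0, 1, by decide, by omega, by omega⟩
        · exact ⟨1, 2, by decide, by omega, by omega⟩
        · exact ⟨0, 1, by decide, by omega, by omega⟩
        · exact ⟨0, 2, by decide, by omega, by omega⟩
        · omega
      obtain ⟨j1, j2, hj12, hn1', hn2'⟩ := hex2
      obtain ⟨u1, hu1⟩ := Finset.card_eq_one.mp hn1'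
      obtain ⟨u2, hu2⟩ := Finset.card_eq_one.mp hn2'
      have hu1m : u1 ∈ S ∧ P j1 u1 = 1 := by
        have : u1 ∈ S.filter (fun g => P j1 g = 1) := hu1 ▸ Finset.mem_singleton_self u1
        exact Finset.mem_filter.mp this
      have hu2m : u2 ∈ S ∧ P j2 u2 = 1 := by
        have : u2 ∈ S.filter (fun g => P j2 g = 1) := hu2 ▸ Finset.mem_singleton_self u2
        exact Finset.mem_filter.mp this
      have hu12 : u1 ≠ u2 := by
        intro h
        exact huniq u1 j1 j2 hj12 hu1m.2 (h ▸ hu2m.2)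
      have hpairK2 : I.v y u1 + I.v y u2 ≤ K2 := by
        rw [hK2def]
        have hmemP : (u1, u2) ∈ PAIRS := by
          rw [hPAIRS, Finset.mem_filter, Finset.mem_product]
          exact ⟨⟨hu1m.1, hu2m.1⟩, hu12⟩
        exact Finset.le_sup' (fun p => I.v y p.1 + I.v y p.2) hmemP
      -- combined bound on the two singleton parts
      have hb1 := hutil j1
      have hb2 := hutil j2
      rw [hu1, Finset.sum_singleton] at hb1
      rw [hu2, Finset.sum_singleton] at hb2
      have hσ12 : P j1 σ * γ + P j2 σ * γ ≤ γ := by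
        have := hPP j1 j2 hj12 σ
        nlinarith [(hP.1 j1 σ).1, (hP.1 j2 σ).1]
      have hd12 : (∑ g ∈ fiveᶜ, P j1 g * I.v y g) + (∑ g ∈ fiveᶜ, P j2 g * I.v y g)
          ≤ dst := by
        rw [hdst, ← Finset.sum_add_distrib]
        apply Finset.sum_le_sum
        intro g _
        have := hPP j1 j2 hj12 g
        nlinarith [(hP.1 j1 g).1, (hP.1 j2 g).1, I.v_nonneg y g]
      have hmin : I.util y (P j1) + I.util y (P j2) ≤ K2 + γ + dst := by linarith
      have hi1 := ciInf_le hbdd j1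
      have hi2 := ciInf_le hbdd j2
      refine le_trans ?_ (le_max_right _ _)
      linarith
  exact absurd hfinal (not_le.mpr hKmaxμ)

end FairDivision

open FairDivision in
set_option maxHeartbeats 2000000 in
/-- A three-agent instance with no (2/3)-high-valued good and no reducible bundle
admits a (2/3)-MMS allocation. -/
theorem three_agent_no_reducible_two_thirds_mms (m : ℕ) (I : FairDivision 3 m)
    (hNoHigh : ∀ a g, I.v a g < 2 / 3 * I.MMS a)
    (hNoRed : ∀ (B : Finset (Fin m)) (i : Fin 3), ¬ I.IsReducible B i) :
    ∃ x, I.IsAllocation x ∧ ∀ i, 2 / 3 * I.MMS i ≤ I.util i (x i) := by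
  classical
  by_cases hm : m = 0
  · -- no goods: the constant allocation works, MMS = 0
    subst hm
    refine ⟨fun _ _ => 1, ⟨fun i g => g.elim0, fun g => g.elim0⟩, ?_⟩
    intro i
    have hu : ∀ (b : Fin 0 → ℝ), I.util i b = 0 := by
      intro b; rw [util]; simp
    have hμ : I.MMS i = 0 := by
      rw [MMS]
      have : {r : ℝ | ∃ P : Fin 3 → Fin 0 → ℝ, I.IsAllocation P ∧
          r = ⨅ j, I.util i (P j)} = {0} := by
        ext r
        simp only [Set.mem_setOf_eq, Set.mem_singleton_iff]
        constructor
        · rintro ⟨P, hP, rfl⟩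
          simp [hu]
        · rintro rfl
          exact ⟨fun _ _ => 1, ⟨fun i g => g.elim0, fun g => g.elim0⟩, by simp [hu]⟩
      rw [this, csSup_singleton]
    rw [hμ, hu]
    norm_num
  -- main case: there is at least one good
  have g0 : Fin m := ⟨0, Nat.pos_of_ne_zero hm⟩
  have hμpos : ∀ a, 0 < I.MMS a := by
    intro a
    have h := hNoHigh a g0
    have h2 := I.v_nonneg a g0
    linarith
  have hV : ∀ a, 3 * I.MMS a ≤ ∑ g, I.v a g := fun a => I.mms_le_total a
  have hcompl : ∀ (B : Finset (Fin m)) (a : Fin 3),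
      ∑ g ∈ B, I.v a g + ∑ g ∈ Bᶜ, I.v a g = ∑ g, I.v a g :=
    fun B a => Finset.sum_add_sum_compl B _
  have hsum0 : ∀ (B : Finset (Fin m)) (a : Fin 3), 0 ≤ ∑ g ∈ B, I.v a g :=
    fun B a => Finset.sum_nonneg fun g _ => I.v_nonneg a g
  have fin3a : ∀ i : Fin 3, ∃ j, j ≠ i := by decide
  have fin3b : ∀ i j : Fin 3, i ≠ j → ∃ k, k ≠ i ∧ k ≠ j := by decide
  have keyL6 : ∀ (B : Finset (Fin m)) (i : Fin 3),
      2 / 3 * I.MMS i ≤ ∑ g ∈ B, I.v i g →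
      (∀ k, k ≠ i → 4 / 3 * I.MMS k ≤ ∑ g ∈ Bᶜ, I.v k g) →
      ∀ j, j ≠ i → ∑ g ∈ Bᶜ, I.v j g < 2 * I.MMS j := by
    intro B i h1 h2 j hj
    by_contra hcon
    push_neg at hcon
    exact hNoRed B i ⟨h1, j, hj, hcon, fun k hk _ => h2 k hk⟩
  have boost : ∀ (B : Finset (Fin m)), (∃ i, 2 / 3 * I.MMS i ≤ ∑ g ∈ B, I.v i g) →
      (∀ a, 4 / 3 * I.MMS a ≤ ∑ g ∈ Bᶜ, I.v a g) →
      ∀ a, I.MMS a < ∑ g ∈ B, I.v a g := by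
    intro B hex htr
    obtain ⟨i, hi⟩ := hex
    have h1 : ∀ j, j ≠ i → ∑ g ∈ Bᶜ, I.v j g < 2 * I.MMS j :=
      keyL6 B i hi (fun k _ => htr k)
    obtain ⟨j0, hj0⟩ := fin3a i
    have hj0B : 2 / 3 * I.MMS j0 ≤ ∑ g ∈ B, I.v j0 g := by
      have hc := hcompl B j0
      have h2 := h1 j0 hj0
      have h3 := hV j0
      have h4 := hμpos j0
      linarith
    have h2 : ∀ j, j ≠ j0 → ∑ g ∈ Bᶜ, I.v j g < 2 * I.MMS j :=
      keyL6 B j0 hj0B (fun k _ => htr k)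
    intro a
    have hlt : ∑ g ∈ Bᶜ, I.v a g < 2 * I.MMS a := by
      by_cases ha : a = j0
      · subst ha; exact h1 _ hj0
      · exact h2 a ha
    have hc := hcompl B a
    have h3 := hV a
    linarith
  -- extract a minimum-cardinality bundle B1 worth ≥ 2/3 MMS to some agent
  obtain ⟨B1, hB1mem, hB1min⟩ := Finset.exists_min_image
    (Finset.univ.powerset.filter
      (fun B : Finset (Fin m) => ∃ a, 2 / 3 * I.MMS a ≤ ∑ g ∈ B, I.v a g))
    Finset.card
    ⟨Finset.univ, Finset.mem_filter.mpr ⟨Finset.mem_powerset.mpr (Finset.Subset.refl _),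
      0, by have := hV 0; have := hμpos 0; have := hcompl Finset.univ 0; linarith⟩⟩
  obtain ⟨i1, hi1⟩ := (Finset.mem_filter.mp hB1mem).2
  have hmin1 : ∀ (B' : Finset (Fin m)) (a : Fin 3), B'.card < B1.card →
      ∑ g ∈ B', I.v a g < 2 / 3 * I.MMS a := by
    intro B' a hcard
    by_contra h
    push_neg at h
    have hmem : B' ∈ Finset.univ.powerset.filter
        (fun B : Finset (Fin m) => ∃ a, 2 / 3 * I.MMS a ≤ ∑ g ∈ B, I.v a g) :=
      Finset.mem_filter.mpr ⟨Finset.mem_powerset.mpr (Finset.subset_univ _), a, h⟩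
    have := hB1min B' hmem
    omega
  have hB1ne : B1.Nonempty := by
    rcases Finset.eq_empty_or_nonempty B1 with h | h
    · exfalso; rw [h, Finset.sum_empty] at hi1; have := hμpos i1; linarith
    · exact h
  have hB1up : ∀ a, ∑ g ∈ B1, I.v a g < 4 / 3 * I.MMS a := by
    intro a
    obtain ⟨g, hg⟩ := hB1ne
    have h1 : ∑ g' ∈ B1.erase g, I.v a g' < 2 / 3 * I.MMS a :=
      hmin1 _ a (Finset.card_erase_lt_of_mem hg)
    have h2 := hNoHigh a g
    have h3 := Finset.add_sum_erase B1 (I.v a) hg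
    linarith
  have hB1compl4 : ∀ a, 4 / 3 * I.MMS a ≤ ∑ g ∈ B1ᶜ, I.v a g := by
    intro a
    have := hcompl B1 a; have := hV a; have := hB1up a; have := hμpos a
    linarith
  have hB1low : ∀ a, I.MMS a < ∑ g ∈ B1, I.v a g := boost B1 ⟨i1, hi1⟩ hB1compl4
  have hB1g : ∀ g ∈ B1, ∀ a, I.MMS a / 3 < I.v a g := by
    intro g hg a
    have h1 : ∑ g' ∈ B1.erase g, I.v a g' < 2 / 3 * I.MMS a :=
      hmin1 _ a (Finset.card_erase_lt_of_mem hg)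
    have h2 := Finset.add_sum_erase B1 (I.v a) hg
    have h3 := hB1low a
    linarith
  have hB1card : 2 ≤ B1.card := by
    by_contra h
    push_neg at h
    interval_cases hc : B1.card
    · rw [Finset.card_eq_zero] at hc
      rw [hc, Finset.sum_empty] at hi1
      have := hμpos i1; linarith
    · obtain ⟨g, hg⟩ := Finset.card_eq_one.mp hc
      rw [hg, Finset.sum_singleton] at hi1
      have := hNoHigh i1 g
      linarith
  -- extract B2 similarly inside B1ᶜ
  obtain ⟨B2, hB2mem, hB2min⟩ := Finset.exists_min_image
    (B1ᶜ.powerset.filter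
      (fun B : Finset (Fin m) => ∃ a, 2 / 3 * I.MMS a ≤ ∑ g ∈ B, I.v a g))
    Finset.card
    ⟨B1ᶜ, Finset.mem_filter.mpr ⟨Finset.mem_powerset.mpr (Finset.Subset.refl _),
      0, by have := hB1compl4 0; have := hμpos 0; linarith⟩⟩
  have hB2sub : B2 ⊆ B1ᶜ := Finset.mem_powerset.mp (Finset.mem_filter.mp hB2mem).1
  obtain ⟨i2, hi2⟩ := (Finset.mem_filter.mp hB2mem).2
  have hmin2 : ∀ (B' : Finset (Fin m)), B' ⊆ B1ᶜ → ∀ (a : Fin 3), B'.card < B2.card →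
      ∑ g ∈ B', I.v a g < 2 / 3 * I.MMS a := by
    intro B' hsub a hcard
    by_contra h
    push_neg at h
    have hmem : B' ∈ B1ᶜ.powerset.filter
        (fun B : Finset (Fin m) => ∃ a, 2 / 3 * I.MMS a ≤ ∑ g ∈ B, I.v a g) :=
      Finset.mem_filter.mpr ⟨Finset.mem_powerset.mpr hsub, a, h⟩
    have := hB2min B' hmem
    omega
  have hB2ne : B2.Nonempty := by
    rcases Finset.eq_empty_or_nonempty B2 with h | h
    · exfalso; rw [h, Finset.sum_empty] at hi2; have := hμpos i2; linarith
    · exact h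
  have hB2up : ∀ a, ∑ g ∈ B2, I.v a g < 4 / 3 * I.MMS a := by
    intro a
    obtain ⟨g, hg⟩ := hB2ne
    have h1 : ∑ g' ∈ B2.erase g, I.v a g' < 2 / 3 * I.MMS a :=
      hmin2 _ ((Finset.erase_subset _ _).trans hB2sub) a (Finset.card_erase_lt_of_mem hg)
    have h2 := hNoHigh a g
    have h3 := Finset.add_sum_erase B2 (I.v a) hg
    linarith
  have hB2compl4 : ∀ a, 4 / 3 * I.MMS a ≤ ∑ g ∈ B2ᶜ, I.v a g := by
    intro a
    have := hcompl B2 a; have := hV a; have := hB2up a; have := hμpos a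
    linarith
  have hB2low : ∀ a, I.MMS a < ∑ g ∈ B2, I.v a g := boost B2 ⟨i2, hi2⟩ hB2compl4
  have hB2g : ∀ g ∈ B2, ∀ a, I.MMS a / 3 < I.v a g := by
    intro g hg a
    have h1 : ∑ g' ∈ B2.erase g, I.v a g' < 2 / 3 * I.MMS a :=
      hmin2 _ ((Finset.erase_subset _ _).trans hB2sub) a (Finset.card_erase_lt_of_mem hg)
    have h2 := Finset.add_sum_erase B2 (I.v a) hg
    have h3 := hB2low a
    linarith
  have hB2card : 2 ≤ B2.card := by
    by_contra h
    push_neg at h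
    interval_cases hc : B2.card
    · rw [Finset.card_eq_zero] at hc
      rw [hc, Finset.sum_empty] at hi2
      have := hμpos i2; linarith
    · obtain ⟨g, hg⟩ := Finset.card_eq_one.mp hc
      rw [hg, Finset.sum_singleton] at hi2
      have := hNoHigh i2 g
      linarith
  have hdisj12 : Disjoint B1 B2 := by
    rw [Finset.disjoint_left]
    intro g hg1 hg2
    exact (Finset.mem_compl.mp (hB2sub hg2)) hg1
  set F : Finset (Fin m) := B1 ∪ B2 with hF
  have hFsum : ∀ a, ∑ g ∈ F, I.v a g = (∑ g ∈ B1, I.v a g) + ∑ g ∈ B2, I.v a g :=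
    fun a => by rw [hF, Finset.sum_union hdisj12]
  have hFg : ∀ g ∈ F, ∀ a, I.MMS a / 3 < I.v a g := by
    intro g hg a
    rcases Finset.mem_union.mp hg with h | h
    · exact hB1g g h a
    · exact hB2g g h a
  have hFcard : F.card = B1.card + B2.card := by
    rw [hF, Finset.card_union_of_disjoint hdisj12]
  have hClow : ∀ a, I.MMS a / 3 < ∑ g ∈ Fᶜ, I.v a g := by
    intro a
    have h1 := hcompl F a
    have h2 := hFsum a
    have := hB1up a; have := hB2up a; have := hV a
    linarith
  -- generic integral allocation from a partition indexed by agents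
  have integral3 : ∀ (R : Fin 3 → Finset (Fin m)),
      (∀ j k, j ≠ k → Disjoint (R j) (R k)) →
      (∀ g, ∃ j, g ∈ R j) →
      (∀ i, 2 / 3 * I.MMS i ≤ ∑ g ∈ R i, I.v i g) →
      ∃ x, I.IsAllocation x ∧ ∀ i, 2 / 3 * I.MMS i ≤ I.util i (x i) := by
    intro R hd hcov hval
    obtain ⟨j0, hj0⟩ := hcov g0
    have huniqR : ∀ k, k ≠ j0 → g0 ∉ R k := fun k hk hgk =>
      (Finset.disjoint_left.mp (hd k j0 hk)) hgk hj0
    have hterm : ∀ k : Fin 3, (if g0 ∈ R k then (1:ℝ) else 0) = if k = j0 then 1 else 0 := by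
      intro k
      by_cases hk : k = j0
      · subst hk; rw [if_pos hj0, if_pos rfl]
      · rw [if_neg (huniqR k hk), if_neg hk]
    have halloc := I.alloc_split (fun i => (R i).erase g0) g0
      (fun j k hjk => Finset.disjoint_of_subset_left (Finset.erase_subset _ _)
        (Finset.disjoint_of_subset_right (Finset.erase_subset _ _) (hd j k hjk)))
      (fun j => Finset.notMem_erase _ _)
      (fun g hg => by
        obtain ⟨j, hj⟩ := hcov g
        exact ⟨j, Finset.mem_erase.mpr ⟨hg, hj⟩⟩)
      (fun i => if g0 ∈ R i then (1:ℝ) else 0)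
      (fun j => by
        show (0:ℝ) ≤ if g0 ∈ R j then 1 else 0
        rw [hterm j]; split_ifs <;> norm_num)
      (fun j => by
        show (if g0 ∈ R j then (1:ℝ) else 0) ≤ 1
        rw [hterm j]; split_ifs <;> norm_num)
      (by
        show (if g0 ∈ R 0 then (1:ℝ) else 0) + (if g0 ∈ R 1 then (1:ℝ) else 0)
            + (if g0 ∈ R 2 then (1:ℝ) else 0) = 1
        rw [hterm 0, hterm 1, hterm 2]; fin_cases j0 <;> simp)
    refine ⟨_, halloc, ?_⟩
    intro i
    show 2 / 3 * I.MMS i ≤ I.util i (fun g => if g = g0 then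
      (if g0 ∈ R i then (1:ℝ) else 0) else if g ∈ (R i).erase g0 then 1 else 0)
    rw [I.util_split i g0 ((R i).erase g0) (Finset.notMem_erase _ _)
      (if g0 ∈ R i then (1:ℝ) else 0)]
    have heq : I.frUtil i g0 (if g0 ∈ R i then (1:ℝ) else 0)
        + ∑ g ∈ (R i).erase g0, I.v i g = ∑ g ∈ R i, I.v i g := by
      by_cases hi : g0 ∈ R i
      · rw [if_pos hi, frUtil_one, Finset.add_sum_erase _ _ hi]
      · rw [if_neg hi, frUtil_zero, Finset.erase_eq_of_notMem hi, zero_add]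
    rw [heq]
    exact hval i
  have hfin3c : ∀ q r w i : Fin 3, q ≠ r → q ≠ w → r ≠ w → i ≠ q → i ≠ r → i = w := by
    intro q r w i hqr hqw hrw hiq hir
    have e1 : q.val ≠ r.val := fun h => hqr (Fin.ext h)
    have e2 : q.val ≠ w.val := fun h => hqw (Fin.ext h)
    have e3 : r.val ≠ w.val := fun h => hrw (Fin.ext h)
    have e4 : i.val ≠ q.val := fun h => hiq (Fin.ext h)
    have e5 : i.val ≠ r.val := fun h => hir (Fin.ext h)
    apply Fin.ext
    have := q.isLt; have := r.isLt; have := w.isLt; have := i.isLt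
    omega
  -- assign three bundles to three named agents
  have assign3 : ∀ (q r w : Fin 3) (Xq Xr Xw : Finset (Fin m)), q ≠ r → q ≠ w → r ≠ w →
      Disjoint Xq Xr → Disjoint Xq Xw → Disjoint Xr Xw →
      (∀ g : Fin m, g ∈ Xq ∨ g ∈ Xr ∨ g ∈ Xw) →
      2 / 3 * I.MMS q ≤ ∑ g ∈ Xq, I.v q g →
      2 / 3 * I.MMS r ≤ ∑ g ∈ Xr, I.v r g →
      2 / 3 * I.MMS w ≤ ∑ g ∈ Xw, I.v w g →
      ∃ x, I.IsAllocation x ∧ ∀ i, 2 / 3 * I.MMS i ≤ I.util i (x i) := by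
    intro q r w Xq Xr Xw hqr hqw hrw dqr dqw drw hcov hq hr hw
    have hcases : ∀ i : Fin 3, i = q ∨ i = r ∨ i = w := by
      intro i
      by_cases h1 : i = q
      · exact Or.inl h1
      by_cases h2 : i = r
      · exact Or.inr (Or.inl h2)
      exact Or.inr (Or.inr (hfin3c q r w i hqr hqw hrw h1 h2))
    set R : Fin 3 → Finset (Fin m) :=
      fun i => if i = q then Xq else if i = r then Xr else Xw with hR
    have hRq : R q = Xq := by
      show (if q = q then Xq else if q = r then Xr else Xw) = Xq
      rw [if_pos rfl]
    have hRr : R r = Xr := by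
      show (if r = q then Xq else if r = r then Xr else Xw) = Xr
      rw [if_neg (Ne.symm hqr), if_pos rfl]
    have hRw : R w = Xw := by
      show (if w = q then Xq else if w = r then Xr else Xw) = Xw
      rw [if_neg (Ne.symm hqw), if_neg (Ne.symm hrw)]
    apply integral3 R
    · intro j k hjk
      rcases hcases j with rfl | rfl | rfl <;> rcases hcases k with rfl | rfl | rfl <;>
        simp only [hRq, hRr, hRw] <;>
        first
        | exact absurd rfl hjk
        | exact dqr
        | exact dqr.symm
        | exact dqw
        | exact dqw.symm
        | exact drw
        | exact drw.symm
    · intro g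
      rcases hcov g with h | h | h
      · exact ⟨q, by rw [hRq]; exact h⟩
      · exact ⟨r, by rw [hRr]; exact h⟩
      · exact ⟨w, by rw [hRw]; exact h⟩
    · intro i
      rcases hcases i with rfl | rfl | rfl
      · rw [hRq]; exact hq
      · rw [hRr]; exact hr
      · rw [hRw]; exact hw
  have two_goods_val : ∀ (T : Finset (Fin m)) (a : Fin 3), T ⊆ F →
      (∃ u ∈ T, ∃ u' ∈ T, u ≠ u') → 2 / 3 * I.MMS a ≤ ∑ g ∈ T, I.v a g := by
    rintro T a hsub ⟨u, hu, u', hu', huu⟩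
    have hpair_sub : ({u, u'} : Finset (Fin m)) ⊆ T := by
      intro x hx
      rcases Finset.mem_insert.mp hx with rfl | hx
      · exact hu
      · exact (Finset.mem_singleton.mp hx) ▸ hu'
    have hle := Finset.sum_le_sum_of_subset_of_nonneg hpair_sub
      (fun g _ _ => I.v_nonneg a g)
    rw [Finset.sum_pair huu] at hle
    have h1 := hFg u (hsub hu) a
    have h2 := hFg u' (hsub hu') a
    linarith
  -- Case: the leftover C = Fᶜ is already worth 2/3 MMS to someone
  by_cases hCbig : ∃ a, 2 / 3 * I.MMS a ≤ ∑ g ∈ Fᶜ, I.v a g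
  · obtain ⟨a, ha⟩ := hCbig
    obtain ⟨b, hb⟩ := fin3a a
    obtain ⟨c, hcb, hca⟩ := fin3b b a hb
    have hd1 : Disjoint Fᶜ B1 := by
      rw [Finset.disjoint_left]
      intro g hg hg1
      exact (Finset.mem_compl.mp hg) (Finset.mem_union_left _ hg1)
    have hd2 : Disjoint Fᶜ B2 := by
      rw [Finset.disjoint_left]
      intro g hg hg2
      exact (Finset.mem_compl.mp hg) (Finset.mem_union_right _ hg2)
    apply assign3 a b c Fᶜ B1 B2 (Ne.symm hb) (Ne.symm hca) (Ne.symm hcb) hd1 hd2 hdisj12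
    · intro g
      by_cases hgF : g ∈ F
      · rcases Finset.mem_union.mp hgF with h | h
        · exact Or.inr (Or.inl h)
        · exact Or.inr (Or.inr h)
      · exact Or.inl (Finset.mem_compl.mpr hgF)
    · exact ha
    · have := hB1low b; have := hμpos b; linarith
    · have := hB2low c; have := hμpos c; linarith
  push_neg at hCbig
  -- Case: at least five goods in F
  by_cases hF5 : 5 ≤ F.card
  · have hFne : F.Nonempty := Finset.card_pos.mp (by omega)
    obtain ⟨gs, hgs⟩ := hFne
    obtain ⟨T, hTsub, hTcard⟩ := Finset.exists_subset_card_eq (s := F.erase gs) (n := 2)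
      (by rw [Finset.card_erase_of_mem hgs]; omega)
    have hTsubF : T ⊆ F := hTsub.trans (Finset.erase_subset _ _)
    have hT2 : (F.erase gs) \ T ⊆ F := (Finset.sdiff_subset).trans (Finset.erase_subset _ _)
    have hgsT : gs ∉ T := fun h => Finset.notMem_erase gs F (hTsub h)
    apply assign3 0 1 2 T ((F.erase gs) \ T) (insert gs Fᶜ)
      (by decide) (by decide) (by decide)
    · exact Finset.disjoint_sdiff
    · rw [Finset.disjoint_left]
      intro g hg hg2
      rcases Finset.mem_insert.mp hg2 with rfl | hg2
      · exact hgsT hg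
      · exact (Finset.mem_compl.mp hg2) (hTsubF hg)
    · rw [Finset.disjoint_left]
      intro g hg hg2
      rcases Finset.mem_insert.mp hg2 with rfl | hg2
      · exact Finset.notMem_erase _ _ (Finset.mem_sdiff.mp hg).1
      · exact (Finset.mem_compl.mp hg2) (hT2 hg)
    · intro g
      by_cases hgF : g ∈ F
      · by_cases hgg : g = gs
        · exact Or.inr (Or.inr (Finset.mem_insert.mpr (Or.inl hgg)))
        · have hge : g ∈ F.erase gs := Finset.mem_erase.mpr ⟨hgg, hgF⟩
          by_cases hgT : g ∈ T
          · exact Or.inl hgT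
          · exact Or.inr (Or.inl (Finset.mem_sdiff.mpr ⟨hge, hgT⟩))
      · exact Or.inr (Or.inr (Finset.mem_insert.mpr (Or.inr (Finset.mem_compl.mpr hgF))))
    · exact two_goods_val T 0 hTsubF (by
        obtain ⟨u, hu, u', hu', huu⟩ := Finset.one_lt_card.mp (by omega : 1 < T.card)
        exact ⟨u, hu, u', hu', huu⟩)
    · refine two_goods_val _ 1 hT2 ?_
      have hcard2 : 2 ≤ ((F.erase gs) \ T).card := by
        rw [Finset.card_sdiff_of_subset hTsub, Finset.card_erase_of_mem hgs, hTcard]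
        omega
      have hcard2' : 1 < ((F.erase gs) \ T).card := by omega
      obtain ⟨u, hu, u', hu', huu⟩ := Finset.one_lt_card.mp hcard2'
      exact ⟨u, hu, u', hu', huu⟩
    · have hsum : ∑ g ∈ insert gs Fᶜ, I.v 2 g = I.v 2 gs + ∑ g ∈ Fᶜ, I.v 2 g := by
        rw [Finset.sum_insert (Finset.notMem_compl.mpr hgs)]
      rw [hsum]
      have := hFg gs hgs 2
      have := hClow 2
      linarith
  -- Endgame: F has exactly four goods
  have hF4 : F.card = 4 := by omega
  have pairμ : ∀ u ∈ F, ∀ u' ∈ F, u ≠ u' → ∀ a, I.MMS a < I.v a u + I.v a u' := by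
    intro u hu u' hu' huu a
    have hb := boost {u, u'}
      ⟨0, by
        rw [Finset.sum_pair huu]
        have := hFg u hu 0; have := hFg u' hu' 0
        linarith⟩
      (by
        intro b
        have hc := hcompl {u, u'} b
        rw [Finset.sum_pair huu] at hc
        have h1 := hNoHigh b u; have h2 := hNoHigh b u'
        have := hV b
        have := hμpos b
        linarith) a
    rwa [Finset.sum_pair huu] at hb
  have herase3 : ∀ g ∈ F, (F.erase g).card = 3 := fun g hg => by
    rw [Finset.card_erase_of_mem hg, hF4]
  have fact9 : ∀ g ∈ F, ∀ a, I.MMS a < I.v a g + ∑ g' ∈ Fᶜ, I.v a g' := by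
    intro g hg a
    have hgC : g ∉ Fᶜ := Finset.notMem_compl.mpr hg
    have hins : ∀ b : Fin 3, ∑ g' ∈ insert g Fᶜ, I.v b g'
        = I.v b g + ∑ g' ∈ Fᶜ, I.v b g' := fun b => Finset.sum_insert hgC
    have hcomplid : (insert g Fᶜ)ᶜ = F.erase g := by
      ext x
      simp only [Finset.mem_compl, Finset.mem_insert, Finset.mem_erase, not_or]
      tauto
    have h3 : ∀ b, 4 / 3 * I.MMS b ≤ ∑ g' ∈ F.erase g, I.v b g' := by
      intro b
      obtain ⟨u1, u2, u3, h12, h13, h23, hset⟩ := Finset.card_eq_three.mp (herase3 g hg)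
      have hu1F : u1 ∈ F := (Finset.erase_subset _ _) (by rw [hset]; simp)
      have hu2F : u2 ∈ F := (Finset.erase_subset _ _) (by rw [hset]; simp)
      have hu3F : u3 ∈ F := (Finset.erase_subset _ _) (by rw [hset]; simp)
      have hsum : ∑ g' ∈ F.erase g, I.v b g' = I.v b u1 + (I.v b u2 + I.v b u3) := by
        rw [hset, Finset.sum_insert (by simp [h12, h13]), Finset.sum_pair h23]
      have p12 := pairμ u1 hu1F u2 hu2F h12 b
      have p13 := pairμ u1 hu1F u3 hu3F h13 b
      have p23 := pairμ u2 hu2F u3 hu3F h23 b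
      have := hμpos b
      rw [hsum]; linarith
    have hb := boost (insert g Fᶜ)
      ⟨0, by rw [hins 0]; have := hFg g hg 0; have := hClow 0; linarith⟩
      (by intro b; rw [hcomplid]; exact h3 b) a
    rwa [hins a] at hb
  have hFnonempty : F.Nonempty := Finset.card_pos.mp (by omega)
  have hm1ex : ∀ a : Fin 3, ∃ b ∈ F, ∀ b' ∈ F, I.v a b' ≤ I.v a b :=
    fun a => F.exists_max_image (I.v a) hFnonempty
  choose m1 hm1F hm1max using hm1ex
  have hm2ex : ∀ a : Fin 3, ∃ b ∈ F.erase (m1 a), ∀ b' ∈ F.erase (m1 a),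
      I.v a b' ≤ I.v a b :=
    fun a => (F.erase (m1 a)).exists_max_image (I.v a)
      (Finset.card_pos.mp (by rw [herase3 _ (hm1F a)]; norm_num))
  choose m2 hm2E hm2max using hm2ex
  have hm2F : ∀ a, m2 a ∈ F := fun a => (Finset.erase_subset _ _) (hm2E a)
  have hm2ne : ∀ a, m2 a ≠ m1 a := fun a => (Finset.mem_erase.mp (hm2E a)).1
  have ho2half : ∀ a, I.MMS a / 2 < I.v a (m2 a) := by
    intro a
    have hcard : 1 < (F.erase (m1 a)).card := by rw [herase3 _ (hm1F a)]; norm_num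
    obtain ⟨u, hu, u', hu', huu⟩ := Finset.one_lt_card.mp hcard
    have h1 := hm2max a u hu
    have h2 := hm2max a u' hu'
    have hp := pairμ u ((Finset.erase_subset _ _) hu) u'
      ((Finset.erase_subset _ _) hu') huu a
    linarith
  have ho2max2 : ∀ (a : Fin 3), ∀ u ∈ F, ∀ u' ∈ F, u ≠ u' →
      I.v a u ≤ I.v a (m2 a) ∨ I.v a u' ≤ I.v a (m2 a) := by
    intro a u hu u' hu' huu
    by_cases h : u = m1 a
    · right
      exact hm2max a u' (Finset.mem_erase.mpr ⟨fun he => huu (h.trans he.symm), hu'⟩)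
    · left
      exact hm2max a u (Finset.mem_erase.mpr ⟨h, hu⟩)
  have hN2 : ∀ q r : Fin 3, q ≠ r → ∃ bq ∈ F, ∃ br ∈ F, bq ≠ br ∧
      I.v q (m2 q) ≤ I.v q bq ∧ I.v r (m2 r) ≤ I.v r br := by
    intro q r hqr
    by_cases he : m1 q = m1 r
    · exact ⟨m1 q, hm1F q, m2 r, hm2F r,
        by rw [he]; exact (hm2ne r).symm,
        hm1max q (m2 q) (hm2F q), le_rfl⟩
    · exact ⟨m1 q, hm1F q, m1 r, hm1F r, he,
        hm1max q (m2 q) (hm2F q), hm1max r (m2 r) (hm2F r)⟩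
  -- feasibility of splitting the leftover between two agents (each with one big good)
  by_cases hFEAS : ∃ q r : Fin 3, q ≠ r ∧ ∃ bq ∈ F, ∃ br ∈ F, bq ≠ br ∧ ∃ S ⊆ Fᶜ,
      2 / 3 * I.MMS q ≤ I.v q bq + ∑ g ∈ S, I.v q g ∧
      2 / 3 * I.MMS r ≤ I.v r br + ∑ g ∈ Fᶜ \ S, I.v r g
  · obtain ⟨q, r, hqr, bq, hbqF, br, hbrF, hbqbr, S, hSC, hq, hr⟩ := hFEAS
    obtain ⟨w, hwq, hwr⟩ := fin3b q r hqr
    have hbqS : bq ∉ S := fun h => (Finset.mem_compl.mp (hSC h)) hbqF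
    have hbrS : br ∉ Fᶜ \ S := fun h =>
      (Finset.mem_compl.mp (Finset.mem_sdiff.mp h).1) hbrF
    apply assign3 q r w (insert bq S) (insert br (Fᶜ \ S)) (F \ {bq, br})
      hqr (Ne.symm hwq) (Ne.symm hwr)
    · rw [Finset.disjoint_left]
      intro g hg1 hg2
      rcases Finset.mem_insert.mp hg1 with rfl | hg1
      · rcases Finset.mem_insert.mp hg2 with h | h
        · exact hbqbr h
        · exact (Finset.mem_compl.mp (Finset.mem_sdiff.mp h).1) hbqF
      · rcases Finset.mem_insert.mp hg2 with rfl | h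
        · exact (Finset.mem_compl.mp (hSC hg1)) hbrF
        · exact (Finset.mem_sdiff.mp h).2 hg1
    · rw [Finset.disjoint_left]
      intro g hg1 hg2
      have hgF := (Finset.mem_sdiff.mp hg2).1
      have hgnot := (Finset.mem_sdiff.mp hg2).2
      rcases Finset.mem_insert.mp hg1 with rfl | hg1
      · exact hgnot (Finset.mem_insert.mpr (Or.inl rfl))
      · exact (Finset.mem_compl.mp (hSC hg1)) hgF
    · rw [Finset.disjoint_left]
      intro g hg1 hg2
      have hgF := (Finset.mem_sdiff.mp hg2).1
      have hgnot := (Finset.mem_sdiff.mp hg2).2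
      rcases Finset.mem_insert.mp hg1 with rfl | hg1
      · exact hgnot (Finset.mem_insert.mpr (Or.inr (Finset.mem_singleton_self _)))
      · exact (Finset.mem_compl.mp (Finset.mem_sdiff.mp hg1).1) hgF
    · intro g
      by_cases hgF : g ∈ F
      · by_cases h1 : g = bq
        · exact Or.inl (Finset.mem_insert.mpr (Or.inl h1))
        by_cases h2 : g = br
        · exact Or.inr (Or.inl (Finset.mem_insert.mpr (Or.inl h2)))
        refine Or.inr (Or.inr (Finset.mem_sdiff.mpr ⟨hgF, ?_⟩))
        intro hmem
        rcases Finset.mem_insert.mp hmem with h | h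
        · exact h1 h
        · exact h2 (Finset.mem_singleton.mp h)
      · by_cases hgS : g ∈ S
        · exact Or.inl (Finset.mem_insert.mpr (Or.inr hgS))
        · exact Or.inr (Or.inl (Finset.mem_insert.mpr (Or.inr
            (Finset.mem_sdiff.mpr ⟨Finset.mem_compl.mpr hgF, hgS⟩))))
    · rw [Finset.sum_insert hbqS]; exact hq
    · rw [Finset.sum_insert hbrS]; exact hr
    · refine two_goods_val _ w Finset.sdiff_subset ?_
      have hsub2 : ({bq, br} : Finset (Fin m)) ⊆ F := by
        intro x hx
        rcases Finset.mem_insert.mp hx with rfl | hx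
        · exact hbqF
        · exact (Finset.mem_singleton.mp hx) ▸ hbrF
      have hcard2 : 1 < (F \ {bq, br}).card := by
        rw [Finset.card_sdiff_of_subset hsub2, Finset.card_pair hbqbr, hF4]
        norm_num
      obtain ⟨u, hu, u', hu', huu⟩ := Finset.one_lt_card.mp hcard2
      exact ⟨u, hu, u', hu', huu⟩
  -- no feasible split: extract the dominant leftover good E
  have infeas : ∀ q r : Fin 3, q ≠ r → ∀ S ⊆ Fᶜ,
      ∑ g ∈ S, I.v q g < 2 / 3 * I.MMS q - I.v q (m2 q) ∨
      ∑ g ∈ Fᶜ \ S, I.v r g < 2 / 3 * I.MMS r - I.v r (m2 r) := by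
    intro q r hqr S hS
    by_contra hcon
    push_neg at hcon
    obtain ⟨bq, hbqF, br, hbrF, hne, hvq, hvr⟩ := hN2 q r hqr
    exact hFEAS ⟨q, r, hqr, bq, hbqF, br, hbrF, hne, S, hS,
      by linarith [hcon.1], by linarith [hcon.2]⟩
  have hdpos : ∀ a, 0 < 2 / 3 * I.MMS a - I.v a (m2 a) := fun a => by
    have := hNoHigh a (m2 a); linarith
  have hd6 : ∀ a, 2 / 3 * I.MMS a - I.v a (m2 a) < I.MMS a / 6 := fun a => by
    have := ho2half a; linarith
  have hdC : ∀ a, 2 / 3 * I.MMS a - I.v a (m2 a) + I.MMS a / 3 < ∑ g ∈ Fᶜ, I.v a g :=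
    fun a => by have := fact9 (m2 a) (hm2F a) a; linarith
  have hSq : ∃ E ∈ Fᶜ,
      ∀ a, ∑ g ∈ Fᶜ.erase E, I.v a g < 2 / 3 * I.MMS a - I.v a (m2 a) := by
    obtain ⟨Sq, hSqmem, hSqmin⟩ := Finset.exists_min_image
      (Fᶜ.powerset.filter (fun S : Finset (Fin m) =>
        2 / 3 * I.MMS 0 - I.v 0 (m2 0) ≤ ∑ g ∈ S, I.v 0 g))
      Finset.card
      ⟨Fᶜ, Finset.mem_filter.mpr ⟨Finset.mem_powerset.mpr (Finset.Subset.refl _), by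
        have := hdC 0; have := hμpos 0; linarith⟩⟩
    have hSqsub : Sq ⊆ Fᶜ := Finset.mem_powerset.mp (Finset.mem_filter.mp hSqmem).1
    have hSqval : 2 / 3 * I.MMS 0 - I.v 0 (m2 0) ≤ ∑ g ∈ Sq, I.v 0 g :=
      (Finset.mem_filter.mp hSqmem).2
    have hSqmin' : ∀ S' ⊆ Fᶜ, S'.card < Sq.card →
        ∑ g ∈ S', I.v 0 g < 2 / 3 * I.MMS 0 - I.v 0 (m2 0) := by
      intro S' hsub hcard
      by_contra h
      push_neg at h
      have := hSqmin S' (Finset.mem_filter.mpr ⟨Finset.mem_powerset.mpr hsub, h⟩)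
      omega
    have hsd : ∀ a : Fin 3, ∑ g ∈ Fᶜ \ Sq, I.v a g + ∑ g ∈ Sq, I.v a g
        = ∑ g ∈ Fᶜ, I.v a g := fun a => Finset.sum_sdiff hSqsub
    have hothers : ∀ r, r ≠ (0 : Fin 3) →
        ∑ g ∈ Fᶜ \ Sq, I.v r g < 2 / 3 * I.MMS r - I.v r (m2 r) := by
      intro r hrq
      rcases infeas 0 r (Ne.symm hrq) Sq hSqsub with h | h
      · exact absurd hSqval (not_le.mpr h)
      · exact h
    obtain ⟨r0, hr0⟩ := fin3a 0
    have hSqr0 : 2 / 3 * I.MMS r0 - I.v r0 (m2 r0) ≤ ∑ g ∈ Sq, I.v r0 g := by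
      have h1 := hothers r0 hr0
      have h2 := hsd r0
      have h3 := hdC r0
      have h4 := hd6 r0
      have := hμpos r0
      linarith
    have hqcompl : ∑ g ∈ Fᶜ \ Sq, I.v 0 g < 2 / 3 * I.MMS 0 - I.v 0 (m2 0) := by
      rcases infeas r0 0 hr0 Sq hSqsub with h | h
      · exact absurd hSqr0 (not_le.mpr h)
      · exact h
    have hSqne : Sq.Nonempty := by
      rcases Finset.eq_empty_or_nonempty Sq with h | h
      · exfalso; rw [h, Finset.sum_empty] at hSqval; have := hdpos 0; linarith
      · exact h
    have hcard1 : Sq.card = 1 := by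
      by_contra hne1
      obtain ⟨e, he⟩ := hSqne
      have hcard2 : 2 ≤ Sq.card := by
        have := Finset.card_pos.mpr (⟨e, he⟩ : Sq.Nonempty)
        omega
      have heF : e ∈ Fᶜ := hSqsub he
      have h_erase : ∑ g ∈ Sq.erase e, I.v 0 g < 2 / 3 * I.MMS 0 - I.v 0 (m2 0) :=
        hSqmin' _ ((Finset.erase_subset _ _).trans hSqsub)
          (Finset.card_erase_lt_of_mem he)
      have hveq : I.v 0 e + ∑ g ∈ Sq.erase e, I.v 0 g = ∑ g ∈ Sq, I.v 0 g :=
        Finset.add_sum_erase _ _ he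
      have hve : 2 / 3 * I.MMS 0 - I.v 0 (m2 0) ≤ I.v 0 e := by
        have h1 := hsd 0
        have h2 := hdC 0
        have h3 := hd6 0
        linarith
      have hc1 : ({e} : Finset (Fin m)).card < Sq.card := by
        rw [Finset.card_singleton]; omega
      have := hSqmin' {e}
        (by intro x hx; rw [Finset.mem_singleton] at hx; exact hx ▸ heF) hc1
      rw [Finset.sum_singleton] at this
      linarith
    obtain ⟨E, hE⟩ := Finset.card_eq_one.mp hcard1
    refine ⟨E, hSqsub (hE ▸ Finset.mem_singleton_self E), ?_⟩
    intro a
    have herase_eq : Fᶜ.erase E = Fᶜ \ Sq := by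
      rw [hE]
      exact (Finset.sdiff_singleton_eq_erase _ _).symm
    rw [herase_eq]
    by_cases ha : a = (0 : Fin 3)
    · exact ha ▸ hqcompl
    · exact hothers a ha
  obtain ⟨E, hEC, hdust⟩ := hSq
  have hEF : E ∉ F := Finset.mem_compl.mp hEC
  have hvE : ∀ a, I.MMS a / 3 < I.v a E := by
    intro a
    have h1 : I.v a E + ∑ g ∈ Fᶜ.erase E, I.v a g = ∑ g ∈ Fᶜ, I.v a g :=
      Finset.add_sum_erase _ _ hEC
    have h2 := hdust a
    have h3 := hdC a
    linarith
  -- allocation with one split good σ shared between agents q and r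
  have assign3s : ∀ (q r w : Fin 3) (Xq Xr Xw : Finset (Fin m)) (σ : Fin m) (α : ℝ),
      q ≠ r → q ≠ w → r ≠ w →
      Disjoint Xq Xr → Disjoint Xq Xw → Disjoint Xr Xw →
      σ ∉ Xq → σ ∉ Xr → σ ∉ Xw →
      (∀ g : Fin m, g ≠ σ → g ∈ Xq ∨ g ∈ Xr ∨ g ∈ Xw) →
      0 ≤ α → α ≤ 1 →
      I.divisible q σ → I.divisible r σ →
      2 / 3 * I.MMS q ≤ α * I.v q σ + ∑ g ∈ Xq, I.v q g →
      2 / 3 * I.MMS r ≤ (1 - α) * I.v r σ + ∑ g ∈ Xr, I.v r g →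
      2 / 3 * I.MMS w ≤ ∑ g ∈ Xw, I.v w g →
      ∃ x, I.IsAllocation x ∧ ∀ i, 2 / 3 * I.MMS i ≤ I.util i (x i) := by
    intro q r w Xq Xr Xw σ α hqr hqw hrw dqr dqw drw sq sr sw hcov hα0 hα1 hdq hdr hq hr hw
    have hcases : ∀ i : Fin 3, i = q ∨ i = r ∨ i = w := by
      intro i
      by_cases h1 : i = q
      · exact Or.inl h1
      by_cases h2 : i = r
      · exact Or.inr (Or.inl h2)
      exact Or.inr (Or.inr (hfin3c q r w i hqr hqw hrw h1 h2))
    set R' : Fin 3 → Finset (Fin m) :=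
      fun i => if i = q then Xq else if i = r then Xr else Xw with hR'
    set W' : Fin 3 → ℝ :=
      fun i => if i = q then α else if i = r then 1 - α else 0 with hW'
    have hRq : R' q = Xq := by
      show (if q = q then Xq else if q = r then Xr else Xw) = Xq
      rw [if_pos rfl]
    have hRr : R' r = Xr := by
      show (if r = q then Xq else if r = r then Xr else Xw) = Xr
      rw [if_neg (Ne.symm hqr), if_pos rfl]
    have hRw : R' w = Xw := by
      show (if w = q then Xq else if w = r then Xr else Xw) = Xw
      rw [if_neg (Ne.symm hqw), if_neg (Ne.symm hrw)]
    have hWq : W' q = α := by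
      show (if q = q then α else if q = r then 1 - α else 0) = α
      rw [if_pos rfl]
    have hWr : W' r = 1 - α := by
      show (if r = q then α else if r = r then 1 - α else 0) = 1 - α
      rw [if_neg (Ne.symm hqr), if_pos rfl]
    have hWw : W' w = 0 := by
      show (if w = q then α else if w = r then 1 - α else 0) = 0
      rw [if_neg (Ne.symm hqw), if_neg (Ne.symm hrw)]
    have huniv : ({q, r, w} : Finset (Fin 3)) = Finset.univ := by
      apply Finset.eq_univ_of_card
      rw [Finset.card_insert_of_notMem (by
        intro hmem
        rcases Finset.mem_insert.mp hmem with h | h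
        · exact hqr h
        · exact hqw (Finset.mem_singleton.mp h)), Finset.card_pair hrw]
      simp
    have hqrw_not : q ∉ ({r, w} : Finset (Fin 3)) := by
      intro hmem
      rcases Finset.mem_insert.mp hmem with h | h
      · exact hqr h
      · exact hqw (Finset.mem_singleton.mp h)
    have halloc := I.alloc_split R' σ
      (by
        intro j k hjk
        rcases hcases j with rfl | rfl | rfl <;> rcases hcases k with rfl | rfl | rfl <;>
          simp only [hRq, hRr, hRw] <;>
          first
          | exact absurd rfl hjk
          | exact dqr
          | exact dqr.symm
          | exact dqw
          | exact dqw.symm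
          | exact drw
          | exact drw.symm)
      (by
        intro j
        rcases hcases j with rfl | rfl | rfl
        · rw [hRq]; exact sq
        · rw [hRr]; exact sr
        · rw [hRw]; exact sw)
      (by
        intro g hg
        rcases hcov g hg with h | h | h
        · exact ⟨q, by rw [hRq]; exact h⟩
        · exact ⟨r, by rw [hRr]; exact h⟩
        · exact ⟨w, by rw [hRw]; exact h⟩)
      W'
      (by
        intro j
        rcases hcases j with rfl | rfl | rfl
        · rw [hWq]; linarith
        · rw [hWr]; linarith
        · rw [hWw])
      (by
        intro j
        rcases hcases j with rfl | rfl | rfl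
        · rw [hWq]; linarith
        · rw [hWr]; linarith
        · rw [hWw]; norm_num)
      (by
        have hsum3 : ∑ i : Fin 3, W' i = 1 := by
          rw [← huniv, Finset.sum_insert hqrw_not, Finset.sum_pair hrw,
            hWq, hWr, hWw]
          ring
        rw [Fin.sum_univ_three] at hsum3
        exact hsum3)
    refine ⟨_, halloc, ?_⟩
    intro i
    rcases hcases i with rfl | rfl | rfl
    · rw [hWq, hRq, I.util_split i σ Xq sq α]
      have hfr : I.frUtil i σ α = α * I.v i σ := by
        unfold frUtil; rw [if_pos hdq]
      rw [hfr]
      exact hq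
    · rw [hWr, hRr, I.util_split i σ Xr sr (1 - α)]
      have hfr : I.frUtil i σ (1 - α) = (1 - α) * I.v i σ := by
        unfold frUtil; rw [if_pos hdr]
      rw [hfr]
      exact hr
    · rw [hWw, hRw, I.util_split i σ Xw sw 0]
      rw [frUtil_zero, zero_add]
      exact hw
  -- shared-divisibility dichotomy over the five goods F ∪ {E}
  by_cases hSH : ∃ g, (g ∈ F ∨ g = E) ∧
      ∃ a b : Fin 3, a ≠ b ∧ I.divisible a g ∧ I.divisible b g
  · -- some five-good divisible for two agents: split it between them
    obtain ⟨σg, hσg5, a, b, hab, hda, hdb⟩ := hSH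
    obtain ⟨w', hw'a, hw'b⟩ := fin3b a b hab
    rcases hσg5 with hσgF | hσgE
    · -- construction A : shared good is in F
      obtain ⟨u1, u2, u3, h12, h13, h23, hset⟩ :=
        Finset.card_eq_three.mp (herase3 σg hσgF)
      have hu1E : u1 ∈ F.erase σg := by rw [hset]; simp
      have hu2E : u2 ∈ F.erase σg := by rw [hset]; simp
      have hu3E : u3 ∈ F.erase σg := by rw [hset]; simp
      have hu1F : u1 ∈ F := (Finset.erase_subset _ _) hu1E
      have hu2F : u2 ∈ F := (Finset.erase_subset _ _) hu2E
      have hu3F : u3 ∈ F := (Finset.erase_subset _ _) hu3E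
      have hu1σ : u1 ≠ σg := (Finset.mem_erase.mp hu1E).1
      have hu2σ : u2 ≠ σg := (Finset.mem_erase.mp hu2E).1
      have hu3σ : u3 ≠ σg := (Finset.mem_erase.mp hu3E).1
      have hvσa : 0 < I.v a σg := by have := hFg σg hσgF a; have := hμpos a; linarith
      have hvσb : 0 < I.v b σg := by have := hFg σg hσgF b; have := hμpos b; linarith
      set α : ℝ := max 0 ((2 / 3 * I.MMS a - I.v a u1) / I.v a σg) with hα
      have hα0 : 0 ≤ α := le_max_left _ _
      have hαlt : α < 1 / 2 := by
        rw [hα]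
        apply max_lt (by norm_num)
        rw [div_lt_iff₀ hvσa]
        have hp := pairμ u1 hu1F σg hσgF hu1σ a
        have hh := hNoHigh a σg
        linarith
      have hαq : 2 / 3 * I.MMS a - I.v a u1 ≤ α * I.v a σg := by
        rcases le_or_gt (2 / 3 * I.MMS a - I.v a u1) 0 with hneg | hpos
        · have : 0 ≤ α * I.v a σg := mul_nonneg hα0 hvσa.le
          linarith
        · have hge : (2 / 3 * I.MMS a - I.v a u1) / I.v a σg ≤ α := le_max_right _ _
          have hmul := mul_le_mul_of_nonneg_right hge hvσa.le
          rwa [div_mul_cancel₀ _ (ne_of_gt hvσa)] at hmul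
      have hαr : 2 / 3 * I.MMS b - I.v b u2 ≤ (1 - α) * I.v b σg := by
        rcases le_or_gt (2 / 3 * I.MMS b - I.v b u2) 0 with hneg | hpos
        · have : 0 ≤ (1 - α) * I.v b σg := mul_nonneg (by linarith) hvσb.le
          linarith
        · have h2 : 2 / 3 * I.MMS b - I.v b u2 < 1 / 2 * I.v b σg := by
            have hp := pairμ u2 hu2F σg hσgF hu2σ b
            have hh := hNoHigh b σg
            linarith
          have h3 : (1 / 2 : ℝ) * I.v b σg ≤ (1 - α) * I.v b σg :=
            mul_le_mul_of_nonneg_right (by linarith) hvσb.le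
          linarith
      refine assign3s a b w' {u1} {u2} (insert u3 Fᶜ) σg α hab (Ne.symm hw'a)
        (Ne.symm hw'b) ?_ ?_ ?_ ?_ ?_ ?_ ?_ hα0 (by linarith) hda hdb ?_ ?_ ?_
      · exact Finset.disjoint_singleton.mpr h12
      · rw [Finset.disjoint_left]
        intro g hg hg2
        rw [Finset.mem_singleton] at hg
        subst hg
        rcases Finset.mem_insert.mp hg2 with h | h
        · exact h13 h
        · exact (Finset.mem_compl.mp h) hu1F
      · rw [Finset.disjoint_left]
        intro g hg hg2
        rw [Finset.mem_singleton] at hg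
        subst hg
        rcases Finset.mem_insert.mp hg2 with h | h
        · exact h23 h
        · exact (Finset.mem_compl.mp h) hu2F
      · simp [Ne.symm hu1σ]
      · simp [Ne.symm hu2σ]
      · intro hmem
        rcases Finset.mem_insert.mp hmem with h | h
        · exact hu3σ h.symm
        · exact (Finset.mem_compl.mp h) hσgF
      · intro g hgσ
        by_cases hgF : g ∈ F
        · have hge : g ∈ F.erase σg := Finset.mem_erase.mpr ⟨hgσ, hgF⟩
          rw [hset] at hge
          rcases Finset.mem_insert.mp hge with h | h
          · exact Or.inl (Finset.mem_singleton.mpr h)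
          rcases Finset.mem_insert.mp h with h' | h'
          · exact Or.inr (Or.inl (Finset.mem_singleton.mpr h'))
          · exact Or.inr (Or.inr (Finset.mem_insert.mpr
              (Or.inl (Finset.mem_singleton.mp h'))))
        · exact Or.inr (Or.inr (Finset.mem_insert.mpr
            (Or.inr (Finset.mem_compl.mpr hgF))))
      · rw [Finset.sum_singleton]
        linarith
      · rw [Finset.sum_singleton]
        linarith
      · have hu3C : u3 ∉ Fᶜ := Finset.notMem_compl.mpr hu3F
        rw [Finset.sum_insert hu3C]
        have := fact9 u3 hu3F w'
        have := hμpos w'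
        linarith
    · -- construction B : shared good is E
      subst hσgE
      obtain ⟨bq, hbqF, br, hbrF, hbqbr, hvq, hvr⟩ := hN2 a b hab
      have hvEa : 0 < I.v a σg := by have := hvE a; have := hμpos a; linarith
      have hvEb : 0 < I.v b σg := by have := hvE b; have := hμpos b; linarith
      set α : ℝ := max 0 ((2 / 3 * I.MMS a - I.v a bq) / I.v a σg) with hα
      have hα0 : 0 ≤ α := le_max_left _ _
      have hαlt : α < 1 / 2 := by
        rw [hα]
        apply max_lt (by norm_num)
        rw [div_lt_iff₀ hvEa]
        have h1 := hd6 a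
        have h2 := hvE a
        linarith
      have hαq : 2 / 3 * I.MMS a - I.v a bq ≤ α * I.v a σg := by
        rcases le_or_gt (2 / 3 * I.MMS a - I.v a bq) 0 with hneg | hpos
        · have : 0 ≤ α * I.v a σg := mul_nonneg hα0 hvEa.le
          linarith
        · have hge : (2 / 3 * I.MMS a - I.v a bq) / I.v a σg ≤ α := le_max_right _ _
          have hmul := mul_le_mul_of_nonneg_right hge hvEa.le
          rwa [div_mul_cancel₀ _ (ne_of_gt hvEa)] at hmul
      have hαr : 2 / 3 * I.MMS b - I.v b br ≤ (1 - α) * I.v b σg := by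
        rcases le_or_gt (2 / 3 * I.MMS b - I.v b br) 0 with hneg | hpos
        · have : 0 ≤ (1 - α) * I.v b σg := mul_nonneg (by linarith) hvEb.le
          linarith
        · have h2 : 2 / 3 * I.MMS b - I.v b br < 1 / 2 * I.v b σg := by
            have h1 := hd6 b
            have h3 := hvE b
            linarith
          have h3 : (1 / 2 : ℝ) * I.v b σg ≤ (1 - α) * I.v b σg :=
            mul_le_mul_of_nonneg_right (by linarith) hvEb.le
          linarith
      have hsub2 : ({bq, br} : Finset (Fin m)) ⊆ F := by
        intro x hx
        rcases Finset.mem_insert.mp hx with rfl | hx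
        · exact hbqF
        · exact (Finset.mem_singleton.mp hx) ▸ hbrF
      refine assign3s a b w' {bq} {br} ((F \ {bq, br}) ∪ Fᶜ.erase σg) σg α hab
        (Ne.symm hw'a) (Ne.symm hw'b) ?_ ?_ ?_ ?_ ?_ ?_ ?_ hα0 (by linarith)
        hda hdb ?_ ?_ ?_
      · exact Finset.disjoint_singleton.mpr hbqbr
      · rw [Finset.disjoint_left]
        intro g hg hg2
        rw [Finset.mem_singleton] at hg
        subst hg
        rcases Finset.mem_union.mp hg2 with h | h
        · exact (Finset.mem_sdiff.mp h).2 (Finset.mem_insert.mpr (Or.inl rfl))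
        · exact (Finset.mem_compl.mp ((Finset.erase_subset _ _) h)) hbqF
      · rw [Finset.disjoint_left]
        intro g hg hg2
        rw [Finset.mem_singleton] at hg
        subst hg
        rcases Finset.mem_union.mp hg2 with h | h
        · exact (Finset.mem_sdiff.mp h).2
            (Finset.mem_insert.mpr (Or.inr (Finset.mem_singleton_self _)))
        · exact (Finset.mem_compl.mp ((Finset.erase_subset _ _) h)) hbrF
      · rw [Finset.mem_singleton]
        intro h
        exact hEF (h ▸ hbqF)
      · rw [Finset.mem_singleton]
        intro h
        exact hEF (h ▸ hbrF)
      · intro hmem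
        rcases Finset.mem_union.mp hmem with h | h
        · exact hEF (Finset.mem_sdiff.mp h).1
        · exact Finset.notMem_erase _ _ h
      · intro g hgσ
        by_cases hgF : g ∈ F
        · by_cases h1 : g = bq
          · exact Or.inl (Finset.mem_singleton.mpr h1)
          by_cases h2 : g = br
          · exact Or.inr (Or.inl (Finset.mem_singleton.mpr h2))
          refine Or.inr (Or.inr (Finset.mem_union.mpr (Or.inl
            (Finset.mem_sdiff.mpr ⟨hgF, ?_⟩))))
          intro hmem
          rcases Finset.mem_insert.mp hmem with h | h
          · exact h1 h
          · exact h2 (Finset.mem_singleton.mp h)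
        · exact Or.inr (Or.inr (Finset.mem_union.mpr (Or.inr
            (Finset.mem_erase.mpr ⟨hgσ, Finset.mem_compl.mpr hgF⟩))))
      · rw [Finset.sum_singleton]
        linarith
      · rw [Finset.sum_singleton]
        linarith
      · have hdisjwu : Disjoint (F \ {bq, br}) (Fᶜ.erase σg) := by
          rw [Finset.disjoint_left]
          intro g hg hg2
          exact (Finset.mem_compl.mp ((Finset.erase_subset _ _) hg2))
            (Finset.mem_sdiff.mp hg).1
        rw [Finset.sum_union hdisjwu]
        have hval : 2 / 3 * I.MMS w' ≤ ∑ g ∈ F \ {bq, br}, I.v w' g := by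
          refine two_goods_val _ w' Finset.sdiff_subset ?_
          have hcard2 : 1 < (F \ {bq, br}).card := by
            rw [Finset.card_sdiff_of_subset hsub2, Finset.card_pair hbqbr, hF4]
            norm_num
          obtain ⟨u, hu, u', hu', huu⟩ := Finset.one_lt_card.mp hcard2
          exact ⟨u, hu, u', hu', huu⟩
        have hnn : 0 ≤ ∑ g ∈ Fᶜ.erase σg, I.v w' g :=
          Finset.sum_nonneg fun g _ => I.v_nonneg w' g
        linarith
  · -- disjoint divisibility: impossible by the MMS upper bound
    exfalso
    set five : Finset (Fin m) := insert E F with hfive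
    have hfive5 : five.card = 5 := by
      rw [hfive, Finset.card_insert_of_notMem hEF, hF4]
    have hDdisj : ∀ a b : Fin 3, a ≠ b →
        Disjoint (five.filter (fun g => I.divisible a g))
          (five.filter (fun g => I.divisible b g)) := by
      intro a b hab
      rw [Finset.disjoint_left]
      intro g hg1 hg2
      obtain ⟨hg5, hda⟩ := Finset.mem_filter.mp hg1
      obtain ⟨_, hdb⟩ := Finset.mem_filter.mp hg2
      refine hSH ⟨g, ?_, a, b, hab, hda, hdb⟩
      rw [hfive] at hg5
      rcases Finset.mem_insert.mp hg5 with h | h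
      · exact Or.inr h
      · exact Or.inl h
    have hDsum : (five.filter (fun g => I.divisible 0 g)).card
        + (five.filter (fun g => I.divisible 1 g)).card
        + (five.filter (fun g => I.divisible 2 g)).card ≤ 5 := by
      have hd01 := hDdisj 0 1 (by decide)
      have hd02 := hDdisj 0 2 (by decide)
      have hd12 := hDdisj 1 2 (by decide)
      have hdu : Disjoint (five.filter (fun g => I.divisible 0 g)
          ∪ five.filter (fun g => I.divisible 1 g))
          (five.filter (fun g => I.divisible 2 g)) :=
        Finset.disjoint_union_left.mpr ⟨hd02, hd12⟩
      have hcard : ((five.filter (fun g => I.divisible 0 g)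
          ∪ five.filter (fun g => I.divisible 1 g))
          ∪ five.filter (fun g => I.divisible 2 g)).card
          = (five.filter (fun g => I.divisible 0 g)).card
          + (five.filter (fun g => I.divisible 1 g)).card
          + (five.filter (fun g => I.divisible 2 g)).card := by
        rw [Finset.card_union_of_disjoint hdu, Finset.card_union_of_disjoint hd01]
      have hsub : (five.filter (fun g => I.divisible 0 g)
          ∪ five.filter (fun g => I.divisible 1 g))
          ∪ five.filter (fun g => I.divisible 2 g) ⊆ five := by
        refine Finset.union_subset (Finset.union_subset ?_ ?_) ?_ <;>
          exact Finset.filter_subset _ _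
      have := Finset.card_le_card hsub
      omega
    have hy : ∃ y : Fin 3, (five.filter (fun g => I.divisible y g)).card ≤ 1 := by
      by_contra hcon
      push_neg at hcon
      have h0 := hcon 0; have h1 := hcon 1; have h2 := hcon 2
      omega
    obtain ⟨y, hycard⟩ := hy
    have hσex : ∃ σ ∈ five, ∀ g ∈ five, g ≠ σ → ¬ I.divisible y g := by
      by_cases hdivy : ∃ g ∈ five, I.divisible y g
      · obtain ⟨σ, hσ5, hσdiv⟩ := hdivy
        refine ⟨σ, hσ5, ?_⟩
        intro g hg hgσ hdg
        have hsub : ({σ, g} : Finset (Fin m)) ⊆ five.filter (fun g => I.divisible y g) := by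
          intro x hx
          rcases Finset.mem_insert.mp hx with rfl | hx
          · exact Finset.mem_filter.mpr ⟨hσ5, hσdiv⟩
          · rw [Finset.mem_singleton] at hx
            subst hx
            exact Finset.mem_filter.mpr ⟨hg, hdg⟩
        have := Finset.card_le_card hsub
        rw [Finset.card_pair (Ne.symm hgσ)] at this
        omega
      · push_neg at hdivy
        exact ⟨E, by rw [hfive]; exact Finset.mem_insert_self _ _,
          fun g hg _ => hdivy g hg⟩
    obtain ⟨σ, hσ5, hindiv⟩ := hσex
    have hfc : fiveᶜ = Fᶜ.erase E := by
      rw [hfive]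
      ext x
      simp only [Finset.mem_compl, Finset.mem_insert, Finset.mem_erase, not_or]
    have hdusty : ∑ g ∈ fiveᶜ, I.v y g < 2 / 3 * I.MMS y - I.v y (m2 y) := by
      rw [hfc]
      exact hdust y
    have hEdust : I.v y E + ∑ g ∈ fiveᶜ, I.v y g = ∑ g ∈ Fᶜ, I.v y g := by
      rw [hfc]
      exact Finset.add_sum_erase _ _ hEC
    have hK0 : I.v y σ + ∑ g ∈ fiveᶜ, I.v y g < I.MMS y := by
      have hσ5' := hσ5
      rw [hfive] at hσ5'
      rcases Finset.mem_insert.mp hσ5' with rfl | hσF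
      · have := hCbig y
        have := hμpos y
        linarith
      · have h1 := hNoHigh y σ
        have h2 := hd6 y
        have := hμpos y
        linarith
    have hpairbound : ∀ u ∈ five, ∀ u' ∈ five, u ≠ u' → u ≠ σ → u' ≠ σ →
        I.v y u + I.v y u' + I.v y σ + ∑ g ∈ fiveᶜ, I.v y g < 2 * I.MMS y := by
      intro u hu u' hu' huu huσ hu'σ
      have hCy := hCbig y
      by_cases huE : u = E
      · subst huE
        have h1 := hNoHigh y u'
        have h2 := hNoHigh y σ
        linarith
      by_cases hu'E : u' = E
      · subst hu'E
        have h1 := hNoHigh y u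
        have h2 := hNoHigh y σ
        linarith
      have huF : u ∈ F := by
        rw [hfive] at hu
        rcases Finset.mem_insert.mp hu with h | h
        · exact absurd h huE
        · exact h
      have hu'F : u' ∈ F := by
        rw [hfive] at hu'
        rcases Finset.mem_insert.mp hu' with h | h
        · exact absurd h hu'E
        · exact h
      by_cases hσE : σ = E
      · subst hσE
        have h1 := hNoHigh y u
        have h2 := hNoHigh y u'
        linarith
      · have h1 := hNoHigh y u
        have h2 := hNoHigh y u'
        have h3 := hNoHigh y σ
        have h4 := hdusty
        rcases ho2max2 y u huF u' hu'F huu with h | h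
        · linarith
        · linarith
    exact (I.endgame_contra y five σ hσ5 hfive5 hindiv hK0 hpairbound)
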